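/- Let R be a skew-Armendariz ring. Then R is a right p.q.-Baer ring with the IFP if and only if the polynomial ring Polynomial R is a right p.q.-Baer ring with the IFP. -/

import Mathlib

/-- A ring `T` is right p.q.-Baer if for every `a ∈ T` the right annihilator of the
principal right ideal `aT` equals `eT` for some idempotent `e ∈ T`. -/
def IsRightPQBaer (T : Type*) [Ring T] : Prop :=
  ∀ a : T, ∃ e : T, e * e = e ∧
    {x : T | ∀ r : T, a * r * x = 0} = {x : T | e * x = x}

/-- A ring `T` has the insertion of factors property (IFP) if `a * b = 0` implies
`a * r * b = 0` for all `r ∈ T`. -/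
def HasIFP (T : Type*) [Ring T] : Prop :=
  ∀ a b : T, a * b = 0 → ∀ r : T, a * r * b = 0

open Polynomial

section Aux

variable {R : Type*} [Ring R]

/-- The weak skew-Armendariz condition bootstraps to the full Armendariz condition. -/
lemma sa_full (hSA : ∀ f g : Polynomial R, f * g = 0 → ∀ j : ℕ, f.coeff 0 * g.coeff j = 0) :
    ∀ (i : ℕ) (f g : Polynomial R), f * g = 0 → ∀ j, f.coeff i * g.coeff j = 0 := by
  intro i
  induction i with
  | zero => exact fun f g h => hSA f g h
  | succ i ih =>
    intro f g hfg j
    have h0 : (C (f.coeff 0)) * g = 0 := by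
      ext n
      simp [coeff_C_mul, hSA f g hfg n]
    have h1 : f.divX * X * g = 0 := by
      have hf : f.divX * X + C (f.coeff 0) = f := divX_mul_X_add f
      have h2 : (f.divX * X + C (f.coeff 0)) * g = 0 := by rw [hf]; exact hfg
      rw [add_mul, h0, add_zero] at h2
      exact h2
    have h2 : f.divX * g = 0 := by
      have hx : X * (f.divX * g) = 0 := by
        rw [← mul_assoc, X_mul]
        exact h1
      ext n
      have hc := congrArg (fun p => Polynomial.coeff p (n + 1)) hx
      simpa [coeff_X_mul] using hc
    have := ih f.divX g h2 j
    simpa [coeff_divX] using this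

lemma mul_mul_eq_zero (f h g : Polynomial R)
    (H : ∀ i j : ℕ, ∀ r : R, f.coeff i * r * g.coeff j = 0) : f * h * g = 0 := by
  rw [mul_assoc]
  ext n
  rw [coeff_mul, coeff_zero]
  apply Finset.sum_eq_zero
  intro p _
  rw [coeff_mul, Finset.mul_sum]
  apply Finset.sum_eq_zero
  intro q _
  rw [← mul_assoc]
  exact H p.1 q.2 (h.coeff q.1)

/-- Finite intersections of the annihilator-idempotent sets are again of this form. -/
lemma exists_idem_pq (hPQ : IsRightPQBaer R) :
    ∀ (n : ℕ) (a : ℕ → R), ∃ e : R, e * e = e ∧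
      ∀ x : R, e * x = x ↔ ∀ i ≤ n, ∀ r : R, a i * r * x = 0 := by
  intro n
  induction n with
  | zero =>
    intro a
    obtain ⟨e, he, hs⟩ := hPQ (a 0)
    refine ⟨e, he, fun x => ?_⟩
    have hx := Set.ext_iff.mp hs x
    constructor
    · intro h i hi r
      have : i = 0 := Nat.le_zero.mp hi
      subst this
      exact hx.mpr h r
    · intro h
      exact hx.mp (h 0 le_rfl)
  | succ n ih =>
    intro a
    obtain ⟨e, he, hes⟩ := ih a
    obtain ⟨f, hf, hfs0⟩ := hPQ (a (n + 1))
    have hfs : ∀ x : R, f * x = x ↔ ∀ r : R, a (n + 1) * r * x = 0 :=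
      fun x => (Set.ext_iff.mp hfs0 x).symm
    have hclosed : ∀ t x : R, f * x = x → f * (t * x) = t * x := by
      intro t x hx
      exact (hfs (t * x)).mpr (fun r => by
        simpa [mul_assoc] using (hfs x).mp hx (r * t))
    have hfef : f * (e * f) = e * f := hclosed e f hf
    refine ⟨e * f, ?_, ?_⟩
    · calc e * f * (e * f) = e * (f * (e * f)) := by rw [mul_assoc]
        _ = e * (e * f) := by rw [hfef]
        _ = e * e * f := by rw [mul_assoc]
        _ = e * f := by rw [he]
    · intro x
      constructor
      · intro h i hi r
        have hex : e * x = x := by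
          conv_lhs => rw [← h]
          rw [mul_assoc e f x, ← mul_assoc e e (f * x), he, ← mul_assoc, h]
        have hfx : f * x = x := by
          conv_lhs => rw [← h, ← mul_assoc]
          rw [hfef, h]
        rcases Nat.lt_succ_iff_lt_or_eq.mp (Nat.lt_succ_of_le hi) with h' | h'
        · exact (hes x).mp hex i (Nat.lt_succ_iff.mp h') r
        · subst h'
          exact (hfs x).mp hfx r
      · intro h
        have hex : e * x = x := (hes x).mpr (fun i hi r => h i (le_trans hi (Nat.le_succ n)) r)
        have hfx : f * x = x := (hfs x).mpr (fun r => h (n + 1) le_rfl r)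
        rw [mul_assoc, hfx, hex]

lemma pq_poly (hPQ : IsRightPQBaer R)
    (hArm : ∀ (i : ℕ) (f g : Polynomial R), f * g = 0 → ∀ j, f.coeff i * g.coeff j = 0) :
    IsRightPQBaer (Polynomial R) := by
  intro fp
  obtain ⟨e, he, hes⟩ := exists_idem_pq hPQ fp.natDegree fp.coeff
  have hes' : ∀ x : R, e * x = x ↔ ∀ i : ℕ, ∀ r : R, fp.coeff i * r * x = 0 := by
    intro x
    rw [hes x]
    constructor
    · intro h i r
      by_cases hi : i ≤ fp.natDegree
      · exact h i hi r
      · rw [coeff_eq_zero_of_natDegree_lt (Nat.lt_of_not_le hi)]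
        simp
    · exact fun h i _ r => h i r
  refine ⟨C e, by rw [← C_mul, he], ?_⟩
  ext g
  simp only [Set.mem_setOf_eq]
  constructor
  · intro h
    have key : ∀ i : ℕ, ∀ r : R, ∀ j : ℕ, fp.coeff i * r * g.coeff j = 0 := by
      intro i r j
      have h1 : fp * (C r * g) = 0 := by
        rw [← mul_assoc]; exact h (C r)
      have h2 := hArm i fp (C r * g) h1 j
      rw [coeff_C_mul] at h2
      rw [mul_assoc]
      exact h2
    ext n
    rw [coeff_C_mul]
    exact (hes' (g.coeff n)).mpr (fun i r => key i r n)
  · intro h hh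
    apply mul_mul_eq_zero
    intro i j r
    have hgj : e * g.coeff j = g.coeff j := by
      have := congrArg (fun p => Polynomial.coeff p j) h
      simpa [coeff_C_mul] using this
    exact (hes' (g.coeff j)).mp hgj i r

end Aux

/-- If `R` is skew-Armendariz, then `R` is a right p.q.-Baer ring with
the IFP iff `Polynomial R` is a right p.q.-Baer ring with the IFP. -/
theorem isRightPQBaer_ifp_iff_polynomial_of_skewArmendariz (R : Type*) [Ring R]
    (hSA : ∀ f g : Polynomial R, f * g = 0 → ∀ j : ℕ, f.coeff 0 * g.coeff j = 0) :
    (IsRightPQBaer R ∧ HasIFP R) ↔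
      (IsRightPQBaer (Polynomial R) ∧ HasIFP (Polynomial R)) := by
  have hArm := sa_full hSA
  constructor
  · rintro ⟨hPQ, hIFP⟩
    refine ⟨pq_poly hPQ hArm, ?_⟩
    intro f g hfg h
    apply mul_mul_eq_zero
    intro i j r
    exact hIFP _ _ (hArm i f g hfg j) r
  · rintro ⟨hPQ, hIFP⟩
    constructor
    · intro a
      obtain ⟨E, hE, hEs⟩ := hPQ (C a)
      refine ⟨E.coeff 0, ?_, ?_⟩
      · have h1 : E * (E - 1) = 0 := by rw [mul_sub, hE, mul_one, sub_self]
        have h2 := hSA E (E - 1) h1 0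
        have : E.coeff 0 * (E.coeff 0 - 1) = 0 := by
          simpa [coeff_sub] using h2
        calc E.coeff 0 * E.coeff 0
            = E.coeff 0 * (E.coeff 0 - 1) + E.coeff 0 := by
              rw [mul_sub, mul_one, sub_add_cancel]
          _ = E.coeff 0 := by rw [this, zero_add]
      · ext x
        simp only [Set.mem_setOf_eq]
        constructor
        · intro h
          have hmem : (C x : Polynomial R) ∈ {g : Polynomial R | ∀ r, C a * r * g = 0} := by
            intro hh
            ext n
            rw [mul_assoc, coeff_C_mul, coeff_mul_C, ← mul_assoc, h (hh.coeff n), coeff_zero]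
          have hEx : E * C x = C x := (Set.ext_iff.mp hEs (C x)).mp hmem
          have := congrArg (fun p => Polynomial.coeff p 0) hEx
          simpa [coeff_mul_C] using this
        · intro h r
          have hEmem : E ∈ {g : Polynomial R | E * g = g} := hE
          have hE2 : ∀ hh : Polynomial R, C a * hh * E = 0 := (Set.ext_iff.mp hEs E).mpr hEmem
          have h3 := congrArg (fun p => Polynomial.coeff p 0) (hE2 (C r))
          have h4 : a * r * E.coeff 0 = 0 := by
            simpa [coeff_C_mul, coeff_mul_C, mul_assoc] using h3
          calc a * r * x = a * r * (E.coeff 0 * x) := by rw [h]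
            _ = a * r * E.coeff 0 * x := by rw [mul_assoc, mul_assoc, mul_assoc]
            _ = 0 := by rw [h4, zero_mul]
    · intro a b hab r
      have h1 : (C a : Polynomial R) * C b = 0 := by rw [← C_mul, hab, C_0]
      have h2 := hIFP _ _ h1 (C r)
      have h3 : (C (a * r * b) : Polynomial R) = 0 := by
        rw [C_mul, C_mul]; exact h2
      exact C_injective (by simpa using h3)
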